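/- For all real numbers a > 0 and b > 0, the integral over (0,∞) of v^{1/2}·exp(−(π/2)·(a·v + b/v)) with respect to v equals √2·(1 + π·√(a·b))·exp(−π·√(a·b)) / (π·a^{3/2}). -/

import Mathlib

open MeasureTheory Real Set

noncomputable def bS (c t : ℝ) : ℝ := Real.sqrt (t ^ 2 + 4 * c)
noncomputable def bX (c t : ℝ) : ℝ := (t + bS c t) / 2

lemma bS_pos {c : ℝ} (hc : 0 < c) (t : ℝ) : 0 < bS c t :=
  Real.sqrt_pos.mpr (by positivity)

lemma bS_sq {c : ℝ} (hc : 0 < c) (t : ℝ) : bS c t ^ 2 = t ^ 2 + 4 * c :=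
  Real.sq_sqrt (by positivity)

lemma abs_lt_bS {c : ℝ} (hc : 0 < c) (t : ℝ) : |t| < bS c t := by
  have h : |t| = Real.sqrt (t ^ 2) := by rw [Real.sqrt_sq_eq_abs]
  rw [h]
  exact Real.sqrt_lt_sqrt (sq_nonneg t) (by linarith)

lemma bX_pos {c : ℝ} (hc : 0 < c) (t : ℝ) : 0 < bX c t := by
  have h := abs_lt_bS hc t
  have := neg_abs_le t
  unfold bX; nlinarith

lemma bX_sq {c : ℝ} (hc : 0 < c) (t : ℝ) : bX c t ^ 2 = t * bX c t + c := by
  have h := bS_sq hc t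
  unfold bX at *
  nlinarith

lemma bX_hasDeriv {c : ℝ} (hc : 0 < c) (t : ℝ) :
    HasDerivAt (bX c) (bX c t / bS c t) t := by
  have h1 : HasDerivAt (fun t : ℝ => t ^ 2 + 4 * c) (2 * t) t := by
    simpa using ((hasDerivAt_pow 2 t).add_const (4 * c))
  have hne : t ^ 2 + 4 * c ≠ 0 := by positivity
  have h2 : HasDerivAt (bS c) (1 / (2 * Real.sqrt (t ^ 2 + 4 * c)) * (2 * t)) t :=
    (Real.hasDerivAt_sqrt hne).comp t h1
  have h3 : HasDerivAt (bX c) ((1 + 1 / (2 * Real.sqrt (t ^ 2 + 4 * c)) * (2 * t)) / 2) t :=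
    ((hasDerivAt_id t).add h2).div_const 2
  convert h3 using 1
  have hs := bS_pos hc t
  have hseq : Real.sqrt (t ^ 2 + 4 * c) = bS c t := rfl
  rw [hseq]
  have hsne : bS c t ≠ 0 := ne_of_gt hs
  field_simp [bX]
  simp only [bX]; ring

lemma int_gauss : Integrable (fun x : ℝ => Real.exp (-x ^ 2)) := by
  simpa using integrable_exp_neg_mul_sq (one_pos)

lemma int_x2 : Integrable (fun x : ℝ => x ^ 2 * Real.exp (-x ^ 2)) := by
  have h := integrable_rpow_mul_exp_neg_mul_sq (b := 1) one_pos (s := 2) (by norm_num)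
  simpa [show ∀ x : ℝ, x ^ (2 : ℝ) = x ^ 2 from fun x => by
    rw [show (2 : ℝ) = ((2 : ℕ) : ℝ) by norm_num, Real.rpow_natCast]] using h

lemma hI1 : ∫ x : ℝ, Real.exp (-x ^ 2) = Real.sqrt π := by
  simpa using integral_gaussian 1

lemma hI2 : ∫ x : ℝ, x ^ 2 * Real.exp (-x ^ 2) = Real.sqrt π / 2 := by
  have h := integral_rpow_mul_exp_neg_rpow (p := 2) (q := 2) two_pos (by norm_num)
  simp_rw [show ∀ x : ℝ, x ^ (2 : ℝ) = x ^ 2 from fun x => by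
    rw [show (2 : ℝ) = ((2 : ℕ) : ℝ) by norm_num, Real.rpow_natCast]] at h
  have hG : Real.Gamma ((2 + 1) / 2) = Real.sqrt π / 2 := by
    rw [show ((2 : ℝ) + 1) / 2 = 1 / 2 + 1 by norm_num,
      Real.Gamma_add_one (by norm_num), Real.Gamma_one_half_eq]
    ring
  rw [hG] at h
  have habs := integral_comp_abs (f := fun x : ℝ => x ^ 2 * Real.exp (-x ^ 2))
  simp only [sq_abs] at habs
  rw [habs, h]
  ring

theorem bessel_aux (p q : ℝ) (hp : 0 < p) (hq : 0 < q) :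
    ∫ v in Ioi (0 : ℝ), Real.sqrt v * Real.exp (-(p * v + q / v))
      = Real.sqrt π * (1 + 2 * Real.sqrt (p * q)) * Real.exp (-(2 * Real.sqrt (p * q)))
        / (2 * p * Real.sqrt p) := by
  set c := Real.sqrt (p * q) with hc_def
  have hc : 0 < c := Real.sqrt_pos.mpr (by positivity)
  have hc2 : c ^ 2 = p * q := Real.sq_sqrt (by positivity)
  set g : ℝ → ℝ := fun v => Real.sqrt v * Real.exp (-(p * v + q / v)) with hg_def
  set φ : ℝ → ℝ := fun t => bX c t ^ 2 / p with hφ_def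
  set φ' : ℝ → ℝ := fun t => 2 * bX c t ^ 2 / (bS c t * p) with hφ'_def
  have hdφ : ∀ t, HasDerivAt φ (φ' t) t := by
    intro t
    have h := ((bX_hasDeriv hc t).pow 2).div_const p
    refine h.congr_deriv ?_
    have hS := bS_pos hc t
    field_simp [hφ'_def]
    simp only [hφ'_def]; field_simp; norm_num; ring
  have ht_eq : ∀ t, bX c t - c / bX c t = t := by
    intro t
    have hX := bX_pos hc t
    have h := bX_sq hc t
    field_simp
    nlinarith
  have hinj : Function.Injective φ := by
    intro t1 t2 h
    have h1 : bX c t1 ^ 2 = bX c t2 ^ 2 := by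
      have := h
      simp only [hφ_def] at this
      field_simp at this
      exact this
    have h2 : bX c t1 = bX c t2 := by
      nlinarith [bX_pos hc t1, bX_pos hc t2]
    rw [← ht_eq t1, ← ht_eq t2, h2]
  have hrange : φ '' univ = Ioi 0 := by
    rw [image_univ]
    ext v
    simp only [mem_range, mem_Ioi]
    constructor
    · rintro ⟨t, rfl⟩
      exact div_pos (pow_pos (bX_pos hc t) 2) hp
    · intro hv
      set y := Real.sqrt (p * v) with hy_def
      have hy : 0 < y := Real.sqrt_pos.mpr (by positivity)
      refine ⟨y - c / y, ?_⟩
      have hSval : bS c (y - c / y) = y + c / y := by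
        unfold bS
        rw [show (y - c / y) ^ 2 + 4 * c = (y + c / y) ^ 2 by field_simp; ring]
        exact Real.sqrt_sq (by positivity)
      have hXval : bX c (y - c / y) = y := by unfold bX; rw [hSval]; ring
      simp only [hφ_def]
      rw [hXval, hy_def, Real.sq_sqrt (by positivity : (0:ℝ) ≤ p * v)]
      field_simp
  have hCoV := integral_image_eq_integral_abs_deriv_smul (s := univ) MeasurableSet.univ
    (fun x _ => (hdφ x).hasDerivWithinAt) hinj.injOn g
  rw [hrange] at hCoV
  rw [hCoV]
  rw [Measure.restrict_univ]
  set K : ℝ := 2 * Real.exp (-(2 * c)) / (p * Real.sqrt p) with hK_def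
  set E : ℝ → ℝ := fun t => (t ^ 2 + c) / 2 * Real.exp (-t ^ 2) with hE_def
  set O : ℝ → ℝ := fun t => t * (t ^ 2 + 3 * c) / (2 * bS c t) * Real.exp (-t ^ 2) with hO_def
  have hpt : (fun t => |φ' t| • g (φ t)) = fun t => K * (E t + O t) := by
    funext t
    have hX := bX_pos hc t
    have hS := bS_pos hc t
    have hXsq := bX_sq hc t
    have hSsq := bS_sq hc t
    have hsp : (0:ℝ) < Real.sqrt p := Real.sqrt_pos.mpr hp
    have hsp2 : Real.sqrt p ^ 2 = p := Real.sq_sqrt hp.le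
    have habs : |φ' t| = 2 * bX c t ^ 2 / (bS c t * p) := abs_of_pos (by positivity)
    have hsqrtφ : Real.sqrt (φ t) = bX c t / Real.sqrt p := by
      simp only [hφ_def]
      rw [Real.sqrt_div (sq_nonneg _), Real.sqrt_sq hX.le]
    have hexp : p * φ t + q / φ t = t ^ 2 + 2 * c := by
      simp only [hφ_def]
      have hXne : bX c t ≠ 0 := ne_of_gt hX
      field_simp
      nlinarith [hXsq, hc2]
    have hcube : bX c t ^ 3 / bS c t = (t ^ 2 + c) / 2 + t * (t ^ 2 + 3 * c) / (2 * bS c t) := by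
      have hXe : bX c t = (t + bS c t) / 2 := rfl
      rw [hXe]
      have hSne : bS c t ≠ 0 := ne_of_gt hS
      field_simp
      ring_nf
      linear_combination (bS c t + 3 * t) * hSsq
    simp only [smul_eq_mul, hg_def]
    rw [habs, hsqrtφ, hexp]
    rw [show -(t ^ 2 + 2 * c) = -t ^ 2 + -(2 * c) by ring, Real.exp_add]
    simp only [hK_def, hE_def, hO_def]
    have step : (t ^ 2 + c) / 2 * Real.exp (-t ^ 2)
        + t * (t ^ 2 + 3 * c) / (2 * bS c t) * Real.exp (-t ^ 2)
        = bX c t ^ 3 / bS c t * Real.exp (-t ^ 2) := by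
      rw [hcube]; ring
    rw [mul_comm (2 * Real.exp (-(2 * c)) / (p * Real.sqrt p))]
    rw [step]
    have hSne : bS c t ≠ 0 := ne_of_gt hS
    have hpne : p ≠ 0 := ne_of_gt hp
    have hspne : Real.sqrt p ≠ 0 := ne_of_gt hsp
    field_simp
  rw [hpt]
  have intE : Integrable E := by
    have : E = fun t => (1 / 2) * (t ^ 2 * Real.exp (-t ^ 2)) + (c / 2) * Real.exp (-t ^ 2) := by
      funext t; simp only [hE_def]; ring
    rw [this]
    exact (int_x2.const_mul _).add (int_gauss.const_mul _)
  have intM : Integrable (fun t : ℝ => (t ^ 2 + 3 * c) / 2 * Real.exp (-t ^ 2)) := by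
    have : (fun t : ℝ => (t ^ 2 + 3 * c) / 2 * Real.exp (-t ^ 2))
        = fun t => (1 / 2) * (t ^ 2 * Real.exp (-t ^ 2)) + (3 * c / 2) * Real.exp (-t ^ 2) := by
      funext t; ring
    rw [this]
    exact (int_x2.const_mul _).add (int_gauss.const_mul _)
  have contS : Continuous (bS c) :=
    Real.continuous_sqrt.comp ((continuous_pow 2).add continuous_const)
  have contO : Continuous O := by
    refine Continuous.mul (Continuous.div ?_ (continuous_const.mul contS) ?_) ?_
    · exact continuous_id.mul ((continuous_pow 2).add continuous_const)
    · intro t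
      exact ne_of_gt (mul_pos two_pos (bS_pos hc t))
    · exact Real.continuous_exp.comp (continuous_pow 2).neg
  have intO : Integrable O := by
    apply Integrable.mono' intM contO.aestronglyMeasurable
    filter_upwards with t
    have hS := bS_pos hc t
    have h1 : ‖O t‖ = |t| * (t ^ 2 + 3 * c) / (2 * bS c t) * Real.exp (-t ^ 2) := by
      simp only [hO_def, norm_eq_abs]
      rw [abs_mul, abs_of_nonneg (Real.exp_pos _).le, abs_div, abs_mul,
        abs_of_nonneg (by positivity : (0:ℝ) ≤ t ^ 2 + 3 * c),
        abs_of_pos (by positivity : (0:ℝ) < 2 * bS c t)]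
    rw [h1]
    have h2 : (t ^ 2 + 3 * c) / 2 = bS c t * (t ^ 2 + 3 * c) / (2 * bS c t) := by
      field_simp
    rw [h2]
    have hle := (abs_lt_bS hc t).le
    gcongr
  have hOzero : ∫ t, O t = 0 := by
    have hneg : ∀ t, O (-t) = -O t := by
      intro t
      simp only [hO_def, bS, neg_sq]
      ring
    have h1 : ∫ t, O (-t) = ∫ t, O t := integral_neg_eq_self O volume
    have h2 : (fun t => O (-t)) = fun t => -O t := funext hneg
    rw [h2] at h1
    rw [integral_neg] at h1
    linarith
  have hEval : ∫ t, E t = Real.sqrt π * (1 + 2 * c) / 4 := by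
    have hdecomp : E = fun t => (1 / 2) * (t ^ 2 * Real.exp (-t ^ 2)) + (c / 2) * Real.exp (-t ^ 2) := by
      funext t; simp only [hE_def]; ring
    rw [hdecomp, integral_add (int_x2.const_mul _) (int_gauss.const_mul _),
      integral_const_mul, integral_const_mul, hI1, hI2]
    ring
  rw [integral_const_mul, integral_add intE intO, hOzero, hEval]
  rw [hK_def]
  have hsp : (0:ℝ) < Real.sqrt p := Real.sqrt_pos.mpr hp
  field_simp
  ring

/-- Equation (bessK+1/2): the weight `+1/2` Bessel-type integral. -/
theorem bessel_integral_pos_one_half (a b : ℝ) (ha : 0 < a) (hb : 0 < b) :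
    (∫ v in Set.Ioi (0 : ℝ), v ^ ((1 : ℝ) / 2) * Real.exp (-(π / 2) * (a * v + b / v)))
      = Real.sqrt 2 * (1 + π * Real.sqrt (a * b)) * Real.exp (-π * Real.sqrt (a * b))
          / (π * a ^ ((3 : ℝ) / 2)) := by
  have hπ := Real.pi_pos
  set p := π * a / 2 with hp_def
  set q := π * b / 2 with hq_def
  have hp : 0 < p := by positivity
  have hq : 0 < q := by positivity
  have hcongr : (∫ v in Set.Ioi (0 : ℝ), v ^ ((1 : ℝ) / 2) * Real.exp (-(π / 2) * (a * v + b / v)))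
      = ∫ v in Set.Ioi (0 : ℝ), Real.sqrt v * Real.exp (-(p * v + q / v)) := by
    refine setIntegral_congr_fun measurableSet_Ioi (fun v hv => ?_)
    have hv0 : (0:ℝ) < v := hv
    rw [← Real.sqrt_eq_rpow]
    congr 1
    rw [hp_def, hq_def]
    ring
  rw [hcongr, bessel_aux p q hp hq]
  have hpq : Real.sqrt (p * q) = π * Real.sqrt (a * b) / 2 := by
    rw [show p * q = (π / 2) ^ 2 * (a * b) by rw [hp_def, hq_def]; ring,
      Real.sqrt_mul (sq_nonneg _), Real.sqrt_sq (by positivity : (0:ℝ) ≤ π / 2)]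
    ring
  rw [hpq,
    show 1 + 2 * (π * Real.sqrt (a * b) / 2) = 1 + π * Real.sqrt (a * b) by ring,
    show -(2 * (π * Real.sqrt (a * b) / 2)) = -π * Real.sqrt (a * b) by ring]
  have ha32 : a ^ ((3 : ℝ) / 2) = a * Real.sqrt a := by
    rw [show (3 : ℝ) / 2 = 1 + 1 / 2 by norm_num, Real.rpow_add ha, Real.rpow_one,
      ← Real.sqrt_eq_rpow]
  have hsp : Real.sqrt p = Real.sqrt π * Real.sqrt a / Real.sqrt 2 := by
    rw [hp_def, Real.sqrt_div (by positivity : (0:ℝ) ≤ π * a), Real.sqrt_mul hπ.le]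
  rw [ha32, hsp, hp_def]
  have hππ : Real.sqrt π * Real.sqrt π = π := Real.mul_self_sqrt hπ.le
  have haa : Real.sqrt a * Real.sqrt a = a := Real.mul_self_sqrt ha.le
  have h22 : Real.sqrt 2 * Real.sqrt 2 = 2 := Real.mul_self_sqrt (by norm_num)
  have hsπ : (0:ℝ) < Real.sqrt π := Real.sqrt_pos.mpr hπ
  have hsa : (0:ℝ) < Real.sqrt a := Real.sqrt_pos.mpr ha
  have hs2 : (0:ℝ) < Real.sqrt 2 := Real.sqrt_pos.mpr (by norm_num)
  rw [div_eq_div_iff (by positivity) (by positivity)]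
  field_simp
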